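/- Let n ≥ 4 be an integer. Let W be the group of ℤ-linear automorphisms of ℤ^n given by signed permutations (ε, σ) with σ a permutation of {1,…,n} and ε ∈ {±1}^n satisfying ε₁ε₂⋯εₙ = 1 (the Weyl group of type D_n). Let M : ℤ^n → ℤ^n be the ℤ-linear map M(x₁, …, xₙ) = (−xₙ, x₁, …, x_{n−1}). Then the set {s ∈ W : s∘M = M∘s} has exactly n elements. -/

import Mathlib

/-- The signed cyclic shift `M(x₁, …, xₙ) = (−xₙ, x₁, …, x_{n−1})` on `ℤ^n`. -/
def signedShift (n : ℕ) [NeZero n] (x : Fin n → ℤ) : Fin n → ℤ :=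
  fun i => if i = 0 then - x (i - 1) else x (i - 1)

/-- The action of a signed permutation `(ε, σ)` on `ℤ^n`:
`x ↦ (ε_{σ⁻¹(1)} x_{σ⁻¹(1)}, …, ε_{σ⁻¹(n)} x_{σ⁻¹(n)})`. -/
def sgnPermAct (n : ℕ) (ε : Fin n → ℤ) (σ : Equiv.Perm (Fin n)) :
    (Fin n → ℤ) → (Fin n → ℤ) :=
  fun x i => ε (σ⁻¹ i) * x (σ⁻¹ i)

namespace Stmt15

open Fin.NatCast Fin.CommRing

variable (n : ℕ) [NeZero n]

def eta (i : Fin n) : ℤ := if i = 0 then -1 else 1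

lemma eta_pm (i : Fin n) : eta n i = 1 ∨ eta n i = -1 := by
  unfold eta; split <;> simp

lemma eta_mul_self (i : Fin n) : eta n i * eta n i = 1 := by
  unfold eta; split <;> norm_num

lemma shift_apply (x : Fin n → ℤ) (i : Fin n) :
    signedShift n x i = eta n i * x (i - 1) := by
  unfold signedShift eta; split <;> ring

def cnt (m : ℕ) (i : Fin n) : ℕ :=
  ((Finset.range m).filter fun t => ((t : ℕ) : Fin n) = i).card

lemma cnt_zero (i : Fin n) : cnt n 0 i = 0 := by simp [cnt]

lemma cnt_succ (m : ℕ) (i : Fin n) :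
    cnt n (m + 1) i = cnt n m i + if ((m : ℕ) : Fin n) = i then 1 else 0 := by
  unfold cnt
  rw [Finset.range_add_one, Finset.filter_insert]
  split
  · rw [Finset.card_insert_of_notMem (by simp)]
  · simp

lemma sum_cnt (m : ℕ) : ∑ i, cnt n m i = m := by
  induction m with
  | zero => simp [cnt_zero]
  | succ m IH =>
    simp only [cnt_succ, Finset.sum_add_distrib, IH]
    rw [Finset.sum_ite_eq Finset.univ ((m : ℕ) : Fin n) (fun _ => 1)]
    simp

lemma prod_W (m : ℕ) : (∏ i : Fin n, ((-1 : ℤ)) ^ (cnt n m i)) = (-1) ^ m := by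
  rw [Finset.prod_pow_eq_pow_sum, sum_cnt]

lemma iterate_apply (m : ℕ) (x : Fin n → ℤ) (i : Fin n) :
    (signedShift n)^[m] x i = (-1) ^ (cnt n m i) * x (i - (m : Fin n)) := by
  induction m generalizing x with
  | zero => simp [cnt_zero]
  | succ m IH =>
    rw [Function.iterate_succ_apply, IH, shift_apply, cnt_succ]
    have e1 : i - ((m : ℕ) : Fin n) - 1 = i - (((m : ℕ) + 1 : ℕ) : Fin n) := by
      push_cast; ring
    have e2 : eta n (i - ((m : ℕ) : Fin n)) =
        if ((m : ℕ) : Fin n) = i then (-1 : ℤ) else 1 := by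
      unfold eta
      simp only [sub_eq_zero]
      by_cases h : ((m : ℕ) : Fin n) = i
      · rw [if_pos h.symm, if_pos h]
      · rw [if_neg (fun hh => h hh.symm), if_neg h]
    rw [e1, e2, pow_add]
    split <;> ring


lemma natCast_fin_eq_iff (m : ℕ) (i : Fin n) (hm : m < 2 * n) :
    (((m : ℕ) : Fin n) = i) ↔ (m = i.val ∨ m = i.val + n) := by
  have hn : 0 < n := Nat.pos_of_ne_zero (NeZero.ne n)
  have hi : i.val < n := i.isLt
  rw [Fin.ext_iff, Fin.val_natCast]
  rcases Nat.lt_or_ge m n with h | h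
  · rw [Nat.mod_eq_of_lt h]; omega
  · have h2 : m - n < n := by omega
    rw [Nat.mod_eq_sub_mod h, Nat.mod_eq_of_lt h2]; omega

lemma cnt_eq (m : ℕ) (hm : m ≤ 2 * n) (i : Fin n) :
    cnt n m i = (if i.val < m then 1 else 0) + (if i.val + n < m then 1 else 0) := by
  induction m with
  | zero => simp [cnt]
  | succ m IH =>
    rw [cnt_succ, IH (by omega)]
    have hiff := natCast_fin_eq_iff n m i (by omega)
    have hi : i.val < n := i.isLt
    by_cases hc : ((m : ℕ) : Fin n) = i
    · have h1 := hiff.1 hc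
      rw [if_pos hc]; split_ifs <;> omega
    · have h1 : ¬(m = i.val ∨ m = i.val + n) := fun h => hc (hiff.2 h)
      rw [if_neg hc]; split_ifs <;> omega

lemma delta_rec (g : (Fin n → ℤ) → (Fin n → ℤ)) (δ : Fin n → ℤ) (d : Fin n)
    (hg : ∀ x i, g x i = δ i * x (i - d))
    (hc : g ∘ signedShift n = signedShift n ∘ g) (i : Fin n) :
    δ i = eta n i * eta n (i - d) * δ (i - 1) := by
  have h := congrFun (congrFun hc (Pi.single (i - 1 - d) (1 : ℤ))) i
  simp only [Function.comp_apply] at h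
  rw [hg, shift_apply, shift_apply, hg] at h
  rw [show i - d - 1 = i - 1 - d from sub_right_comm i d 1] at h
  simp only [Pi.single_eq_same] at h
  have hsq := eta_mul_self n (i - d)
  linear_combination (eta n (i - d)) * h - δ i * hsq

lemma delta_ext (δ δ' : Fin n → ℤ) (r : Fin n → ℤ)
    (h1 : ∀ i, δ i = r i * δ (i - 1)) (h2 : ∀ i, δ' i = r i * δ' (i - 1))
    (h0 : δ 0 = δ' 0) : ∀ i, δ i = δ' i := by
  have key : ∀ m : ℕ, δ ((m : ℕ) : Fin n) = δ' ((m : ℕ) : Fin n) := by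
    intro m
    induction m with
    | zero => simpa using h0
    | succ m IH =>
      have e : (((m : ℕ) + 1 : ℕ) : Fin n) - 1 = ((m : ℕ) : Fin n) := by
        push_cast; ring
      rw [h1, h2, e, IH]
  intro i
  have := key i.val
  rwa [Fin.cast_val_eq_self] at this

lemma pm_ne_zero {a : ℤ} (h : a = 1 ∨ a = -1) : a ≠ 0 := by
  rcases h with h | h <;> simp [h]

lemma sigma_step (ε : Fin n → ℤ) (σ : Equiv.Perm (Fin n))
    (hε : ∀ i, ε i = 1 ∨ ε i = -1)
    (hc : sgnPermAct n ε σ ∘ signedShift n = signedShift n ∘ sgnPermAct n ε σ)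
    (j : Fin n) : σ (j + 1) = σ j + 1 := by
  have h := congrFun (congrFun hc (Pi.single j (1 : ℤ))) (σ (j + 1))
  simp only [Function.comp_apply] at h
  unfold sgnPermAct at h
  rw [shift_apply, shift_apply] at h
  rw [show σ⁻¹ (σ (j + 1)) = j + 1 from σ.symm_apply_apply _] at h
  rw [show j + 1 - 1 = j from add_sub_cancel_right j 1, Pi.single_eq_same] at h
  -- h : ε (j+1) * (eta n (j+1) * 1) = eta n (σ (j+1)) * (ε (σ⁻¹ (σ (j+1) - 1)) * Pi.single j 1 (σ⁻¹ (σ (j+1) - 1)))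
  by_cases hu : σ⁻¹ (σ (j + 1) - 1) = j
  · have := congrArg σ hu
    rw [show σ (σ⁻¹ (σ (j + 1) - 1)) = σ (j + 1) - 1 from σ.apply_symm_apply _] at this
    have : σ (j + 1) = σ j + 1 := by rw [← this]; ring
    exact this
  · rw [Pi.single_eq_of_ne hu] at h
    have h1 : ε (j + 1) * (eta n (j + 1) * 1) ≠ 0 := by
      have := pm_ne_zero (hε (j + 1))
      have := pm_ne_zero (eta_pm n (j + 1))
      simp_all
    rw [h] at h1
    simp at h1

lemma sigma_eq (σ : Equiv.Perm (Fin n)) (step : ∀ j, σ (j + 1) = σ j + 1) :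
    ∀ i, σ i = σ 0 + i := by
  have key : ∀ m : ℕ, σ ((m : ℕ) : Fin n) = σ 0 + ((m : ℕ) : Fin n) := by
    intro m
    induction m with
    | zero => simp
    | succ m IH =>
      have e : (((m : ℕ) + 1 : ℕ) : Fin n) = ((m : ℕ) : Fin n) + 1 := by push_cast; ring
      rw [e, step, IH]; ring
  intro i
  have := key i.val
  rwa [Fin.cast_val_eq_self] at this


lemma iterate_comm (m : ℕ) :
    (signedShift n)^[m] ∘ signedShift n = signedShift n ∘ (signedShift n)^[m] := by
  funext x
  simp only [Function.comp_apply]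
  rw [← Function.iterate_succ_apply, Function.iterate_succ_apply']

/-- `N^[m]` expressed as a signed permutation action. -/
lemma iterate_as_sgnPermAct (m : ℕ) :
    (signedShift n)^[m] =
      sgnPermAct n (fun j => (-1) ^ (cnt n m (j + ((m : ℕ) : Fin n))))
        (Equiv.addRight ((m : ℕ) : Fin n)) := by
  funext x i
  rw [iterate_apply]
  unfold sgnPermAct
  simp only [Equiv.Perm.inv_def, Equiv.addRight_symm, Equiv.coe_addRight]
  rw [show i + -(((m : ℕ) : Fin n)) + ((m : ℕ) : Fin n) = i from by ring,
    show i + -(((m : ℕ) : Fin n)) = i - ((m : ℕ) : Fin n) from by ring]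

/-- membership of `N^[2k]` in the set. -/
lemma easy_dir (k : ℕ) :
    (∃ (ε : Fin n → ℤ) (σ : Equiv.Perm (Fin n)),
        (∀ i, ε i = 1 ∨ ε i = -1) ∧ (∏ i, ε i) = 1 ∧
        (signedShift n)^[2 * k] = sgnPermAct n ε σ) ∧
      (signedShift n)^[2 * k] ∘ signedShift n =
        signedShift n ∘ (signedShift n)^[2 * k] := by
  constructor
  · refine ⟨fun j => (-1) ^ (cnt n (2 * k) (j + (((2 * k : ℕ)) : Fin n))),
      Equiv.addRight (((2 * k : ℕ)) : Fin n), fun i => ?_, ?_, iterate_as_sgnPermAct n (2 * k)⟩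
    · rcases Nat.even_or_odd (cnt n (2 * k) (i + (((2 * k : ℕ)) : Fin n))) with h | h
      · left; exact h.neg_one_pow
      · right; exact h.neg_one_pow
    · have e := Fintype.prod_equiv (Equiv.addRight (((2 * k : ℕ)) : Fin n))
        (fun j => (-1 : ℤ) ^ (cnt n (2 * k) (j + (((2 * k : ℕ)) : Fin n))))
        (fun j => (-1 : ℤ) ^ (cnt n (2 * k) j))
        (fun j => by simp [Equiv.coe_addRight])
      rw [e, prod_W, pow_mul]
      norm_num
  · exact iterate_comm n (2 * k)


lemma iterate_n_apply (x : Fin n → ℤ) (i : Fin n) : (signedShift n)^[n] x i = - x i := by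
  rw [iterate_apply]
  have h1 : cnt n n i = 1 := by
    rw [cnt_eq n n (by omega) i]
    have := i.isLt
    split_ifs <;> omega
  rw [h1, Fin.natCast_self, sub_zero]
  ring

lemma inj_aux (a b : ℕ) (hab : b = a + n)
    (h : (signedShift n)^[a] = (signedShift n)^[b]) : False := by
  have h1 := congrFun (congrFun h (fun _ => (1 : ℤ))) 0
  rw [iterate_apply, hab, Function.iterate_add_apply, iterate_apply, iterate_n_apply] at h1
  simp only [mul_one, mul_neg] at h1
  have h2 : ((-1 : ℤ)) ^ (cnt n a 0) = 0 := by linarith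
  exact pow_ne_zero _ (by norm_num : (-1 : ℤ) ≠ 0) h2

lemma shift_val_eq (a b : ℕ) (h : (signedShift n)^[a] = (signedShift n)^[b]) :
    a % n = b % n := by
  have h1 := congrFun (congrFun h (Pi.single (0 : Fin n) (1 : ℤ))) ((a : ℕ) : Fin n)
  rw [iterate_apply, iterate_apply] at h1
  by_cases hc : ((a : ℕ) : Fin n) = ((b : ℕ) : Fin n)
  · rw [Fin.ext_iff, Fin.val_natCast, Fin.val_natCast] at hc
    exact hc
  · exfalso
    rw [sub_self, Pi.single_eq_same,
      Pi.single_eq_of_ne (sub_ne_zero.2 hc)] at h1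
    have h2 : ((-1 : ℤ)) ^ (cnt n a ((a : ℕ) : Fin n)) = 0 := by linarith
    exact pow_ne_zero _ (by norm_num : (-1 : ℤ) ≠ 0) h2

lemma G_inj : Function.Injective (fun k : Fin n => (signedShift n)^[2 * (k : ℕ)]) := by
  have hn : 0 < n := Nat.pos_of_ne_zero (NeZero.ne n)
  intro k k' h
  simp only at h
  have hm : (2 * (k : ℕ)) % n = (2 * (k' : ℕ)) % n := shift_val_eq n _ _ h
  have hk := k.isLt
  have hk' := k'.isLt
  rcases lt_trichotomy (k : ℕ) (k' : ℕ) with hlt | heq | hlt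
  · exfalso
    have hd : n ∣ (2 * (k' : ℕ) - 2 * (k : ℕ)) := (Nat.modEq_iff_dvd' (by omega)).1 hm
    obtain ⟨t, ht⟩ := hd
    have ht2 : t < 2 := by
      by_contra hh
      push_neg at hh
      have := Nat.mul_le_mul_left n hh
      omega
    interval_cases t
    · omega
    · exact inj_aux n (2 * (k : ℕ)) (2 * (k' : ℕ)) (by omega) h
  · exact Fin.ext heq
  · exfalso
    have hd : n ∣ (2 * (k : ℕ) - 2 * (k' : ℕ)) :=
      (Nat.modEq_iff_dvd' (by omega)).1 hm.symm
    obtain ⟨t, ht⟩ := hd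
    have ht2 : t < 2 := by
      by_contra hh
      push_neg at hh
      have := Nat.mul_le_mul_left n hh
      omega
    interval_cases t
    · omega
    · exact inj_aux n (2 * (k' : ℕ)) (2 * (k : ℕ)) (by omega) h.symm

lemma hard_dir (ε : Fin n → ℤ) (σ : Equiv.Perm (Fin n))
    (hε : ∀ i, ε i = 1 ∨ ε i = -1) (hprod : (∏ i, ε i) = 1)
    (hc : sgnPermAct n ε σ ∘ signedShift n = signedShift n ∘ sgnPermAct n ε σ) :
    ∃ k : Fin n, (signedShift n)^[2 * (k : ℕ)] = sgnPermAct n ε σ := by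
  have hn : 0 < n := Nat.pos_of_ne_zero (NeZero.ne n)
  set d : Fin n := σ 0 with hd
  have hσ : ∀ i, σ i = d + i := sigma_eq n σ (sigma_step n ε σ hε hc)
  have hσinv : ∀ i, σ⁻¹ i = i - d := by
    intro i
    rw [Equiv.Perm.inv_def, Equiv.symm_apply_eq, hσ]
    ring
  set δ : Fin n → ℤ := fun i => ε (i - d) with hδ
  have hform : ∀ x i, sgnPermAct n ε σ x i = δ i * x (i - d) := by
    intro x i
    unfold sgnPermAct
    rw [hσinv]
  have hrec := delta_rec n _ δ d hform hc
  have hWrec : ∀ (m : ℕ), ((m : ℕ) : Fin n) = d → ∀ i,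
      ((-1 : ℤ)) ^ (cnt n m i) = eta n i * eta n (i - d) * (-1) ^ (cnt n m (i - 1)) := by
    intro m hm i
    have hgform : ∀ x i, (signedShift n)^[m] x i = (-1) ^ (cnt n m i) * x (i - d) := by
      intro x i
      rw [iterate_apply, hm]
    exact delta_rec n _ _ d hgform (iterate_comm n m) i
  have hd1 : ((d.val : ℕ) : Fin n) = d := Fin.cast_val_eq_self d
  have hdlt := d.isLt
  have hd2 : (((d.val + n : ℕ)) : Fin n) = d := by
    push_cast [Fin.natCast_self]
    simp [hd1]
  have hc1 : cnt n (d.val + n) 0 = cnt n d.val 0 + 1 := by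
    rw [cnt_eq n _ (by omega), cnt_eq n _ (by omega)]
    rw [Fin.val_zero]
    split_ifs <;> omega
  obtain ⟨m, hm1, hm2, hm3⟩ :
      ∃ m : ℕ, ((m : ℕ) : Fin n) = d ∧ m < 2 * n ∧ ((-1 : ℤ)) ^ (cnt n m 0) = δ 0 := by
    by_cases hcase : ((-1 : ℤ)) ^ (cnt n d.val 0) = δ 0
    · exact ⟨d.val, hd1, by omega, hcase⟩
    · refine ⟨d.val + n, hd2, by omega, ?_⟩
      rw [hc1, pow_succ]
      have hδ0 : δ 0 = 1 ∨ δ 0 = -1 := hε (0 - d)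
      have hp : ((-1 : ℤ)) ^ (cnt n d.val 0) = 1 ∨ ((-1 : ℤ)) ^ (cnt n d.val 0) = -1 := by
        rcases Nat.even_or_odd (cnt n d.val 0) with h | h
        · exact Or.inl h.neg_one_pow
        · exact Or.inr h.neg_one_pow
      rcases hp with h1 | h1 <;> rcases hδ0 with h2 | h2 <;> rw [h1, h2] at hcase ⊢ <;>
        first
          | (exfalso; exact hcase rfl)
          | ring
  have heq : ∀ i, δ i = (-1 : ℤ) ^ (cnt n m i) :=
    delta_ext n δ (fun i => (-1) ^ (cnt n m i)) (fun i => eta n i * eta n (i - d))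
      hrec (hWrec m hm1) hm3.symm
  have hfeq : (signedShift n)^[m] = sgnPermAct n ε σ := by
    funext x i
    rw [iterate_apply, hm1, hform, heq]
  have hδprod : (∏ i, δ i) = 1 := by
    calc ∏ i, δ i = ∏ i, ε (i - d) := rfl
    _ = ∏ i, ε i := by
        have e := Fintype.prod_equiv (Equiv.subRight d) (fun i => ε (i - d)) ε
          (fun i => by simp)
        exact e
    _ = 1 := hprod
  have hmeven : Even m := by
    have hpm : ((-1 : ℤ)) ^ m = 1 := by
      rw [← prod_W n m,
        show (∏ i, ((-1 : ℤ)) ^ (cnt n m i)) = ∏ i, δ i from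
          (Finset.prod_congr rfl (fun i _ => (heq i).symm))]
      exact hδprod
    exact (neg_one_pow_eq_one_iff_even (by norm_num : (-1 : ℤ) ≠ 1)).1 hpm
  obtain ⟨t, ht⟩ := hmeven
  refine ⟨⟨t, by omega⟩, ?_⟩
  have e2 : 2 * ((⟨t, by omega⟩ : Fin n) : ℕ) = m := by
    simp only [Fin.val_mk]
    omega
  rw [e2]
  exact hfeq

end Stmt15

/-- Let `n ≥ 4`, let `W` be the Weyl group of type `Dₙ`, realized as the
signed permutations `(ε, σ)` of `ℤ^n` with `ε₁⋯εₙ = 1`, and let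
`M(x₁, …, xₙ) = (−xₙ, x₁, …, x_{n−1})`.  Then the set
`{s ∈ W : s∘M = M∘s}` has exactly `n` elements. -/
theorem stmt_15 (n : ℕ) [NeZero n] (hn : 4 ≤ n) :
    Set.ncard {f : (Fin n → ℤ) → (Fin n → ℤ) |
      (∃ (ε : Fin n → ℤ) (σ : Equiv.Perm (Fin n)),
        (∀ i, ε i = 1 ∨ ε i = -1) ∧ (∏ i, ε i) = 1 ∧ f = sgnPermAct n ε σ) ∧
      f ∘ signedShift n = signedShift n ∘ f} = n := by
  classical
  have hset : {f : (Fin n → ℤ) → (Fin n → ℤ) |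
      (∃ (ε : Fin n → ℤ) (σ : Equiv.Perm (Fin n)),
        (∀ i, ε i = 1 ∨ ε i = -1) ∧ (∏ i, ε i) = 1 ∧ f = sgnPermAct n ε σ) ∧
      f ∘ signedShift n = signedShift n ∘ f} =
      Set.range (fun k : Fin n => (signedShift n)^[2 * (k : ℕ)]) := by
    ext f
    simp only [Set.mem_setOf_eq, Set.mem_range]
    constructor
    · rintro ⟨⟨ε, σ, hε, hprod, rfl⟩, hcomm⟩
      exact Stmt15.hard_dir n ε σ hε hprod hcomm
    · rintro ⟨k, rfl⟩
      obtain ⟨⟨ε, σ, h1, h2, h3⟩, h4⟩ := Stmt15.easy_dir n (k : ℕ)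
      exact ⟨⟨ε, σ, h1, h2, h3⟩, h4⟩
  rw [hset, ← Set.image_univ, Set.ncard_image_of_injective _ (Stmt15.G_inj n),
    Set.ncard_univ]
  simp
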